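/- Let X be a locally convex space and T an invertible continuous linear operator on X with dense set of periodic points. If T has the periodic shadowing property, then T has the finite shadowing property. -/

import Mathlib

private lemma stmt5_pow_iter {X : Type*} [AddCommGroup X] [Module ℝ X] [TopologicalSpace X]
    (T : X →L[ℝ] X) (n : ℕ) (v : X) : (T ^ n) v = (⇑T)^[n] v := by
  induction n generalizing v with
  | zero => simp
  | succ n ih =>
    rw [pow_succ, ContinuousLinearMap.mul_apply, Function.iterate_succ_apply, ih]

private lemma stmt5_mod {α : Type*} (g : ℕ → α) (p : ℕ) (hp : 1 ≤ p)
    (hg : ∀ a, g (a + p) = g a) : ∀ a, g a = g (a % p) := by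
  intro a
  induction a using Nat.strong_induction_on with
  | _ a ih =>
    by_cases h : a < p
    · rw [Nat.mod_eq_of_lt h]
    · have h2 : a - p + p = a := by omega
      have h3 := hg (a - p)
      rw [h2] at h3
      rw [h3, ih (a - p) (by omega)]
      exact congrArg g (Nat.mod_eq_sub_mod (by omega)).symm

/-- The auxiliary periodic pseudo-trajectory builder. -/
private noncomputable def stmt5_Y {X : Type*} [AddCommGroup X] [Module ℝ X]
    (x : ℕ → X) (q q' : X) (Tf Tg : X → X) (k N P : ℕ) : ℕ → X := fun r =>
  if r ≤ k then x r
  else if r ≤ k + N + 1 then (1 - ((r - k - 1 : ℕ) : ℝ) / (N : ℝ)) • Tf^[r - k - 1] q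
  else (((r - k - N - 1 : ℕ) : ℝ) / (N : ℝ)) • Tg^[P - r] q'

private lemma stmt5_Y1 {X : Type*} [AddCommGroup X] [Module ℝ X]
    (x : ℕ → X) (q q' : X) (Tf Tg : X → X) (k N P : ℕ) {r : ℕ} (h : r ≤ k) :
    stmt5_Y x q q' Tf Tg k N P r = x r := by
  unfold stmt5_Y; rw [if_pos h]

private lemma stmt5_Y2 {X : Type*} [AddCommGroup X] [Module ℝ X]
    (x : ℕ → X) (q q' : X) (Tf Tg : X → X) (k N P : ℕ) {r : ℕ} (h1 : k < r)
    (h2 : r ≤ k + N + 1) :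
    stmt5_Y x q q' Tf Tg k N P r
      = (1 - ((r - k - 1 : ℕ) : ℝ) / (N : ℝ)) • Tf^[r - k - 1] q := by
  unfold stmt5_Y; rw [if_neg (by omega), if_pos h2]

private lemma stmt5_Y3 {X : Type*} [AddCommGroup X] [Module ℝ X]
    (x : ℕ → X) (q q' : X) (Tf Tg : X → X) (k N P : ℕ) {r : ℕ} (h1 : k + N + 1 < r) :
    stmt5_Y x q q' Tf Tg k N P r
      = (((r - k - N - 1 : ℕ) : ℝ) / (N : ℝ)) • Tg^[P - r] q' := by
  unfold stmt5_Y; rw [if_neg (by omega), if_neg (by omega)]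

/-- If an invertible continuous linear operator `T` on a locally convex space has a
dense set of periodic points and the periodic shadowing property, then it has the
finite shadowing property. -/
theorem stmt5 {X : Type*} [AddCommGroup X] [Module ℝ X] [TopologicalSpace X]
    [IsTopologicalAddGroup X] [ContinuousSMul ℝ X] [LocallyConvexSpace ℝ X]
    (T : X ≃L[ℝ] X)
    (hdense : Dense {x : X | ∃ p : ℕ, 1 ≤ p ∧ ((T : X →L[ℝ] X) ^ p) x = x})
    (hPSP : ∀ V ∈ nhds (0 : X), ∃ U ∈ nhds (0 : X),
      ∀ x : ℤ → X, (∀ j : ℤ, T (x j) - x (j + 1) ∈ U) →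
        (∃ p : ℕ, 1 ≤ p ∧ ∀ j : ℤ, x (j + p) = x j) →
        ∃ o : ℤ → X, (∀ j : ℤ, o (j + 1) = T (o j)) ∧
          (∃ p : ℕ, 1 ≤ p ∧ ∀ j : ℤ, o (j + p) = o j) ∧ ∀ j : ℤ, x j - o j ∈ V) :
    ∀ V ∈ nhds (0 : X), ∃ U ∈ nhds (0 : X),
      ∀ k : ℕ, 1 ≤ k → ∀ x : ℕ → X, (∀ j < k, T (x j) - x (j + 1) ∈ U) →
        ∃ z : X, ∀ j ≤ k, x j - ((T : X →L[ℝ] X) ^ j) z ∈ V := by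
  classical
  intro V hV
  obtain ⟨U, hU, hshadow⟩ := hPSP V hV
  refine ⟨U, hU, ?_⟩
  intro k hk x hx
  -- choose a periodic point q close to T (x k)
  have hnq : {y : X | T (x k) - y ∈ U} ∈ nhds (T (x k)) := by
    have hc : Continuous fun y : X => T (x k) - y := continuous_const.sub continuous_id
    exact (hc.continuousAt (x := T (x k))).preimage_mem_nhds (by simpa using hU)
  obtain ⟨q, hqU, p, hp, hqper⟩ := mem_closure_iff_nhds.mp (hdense (T (x k))) _ hnq
  -- choose a periodic point q' close to x 0
  have hnq' : {y : X | y - x 0 ∈ U} ∈ nhds (x 0) := by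
    have hc : Continuous fun y : X => y - x 0 := continuous_id.sub continuous_const
    exact (hc.continuousAt (x := x 0)).preimage_mem_nhds (by simpa using hU)
  obtain ⟨q', hq'U, p', hp', hq'per⟩ := mem_closure_iff_nhds.mp (hdense (x 0)) _ hnq'
  have hqU : T (x k) - q ∈ U := hqU
  have hq'U : q' - x 0 ∈ U := hq'U
  -- turn the periodicity statements into iterate form
  have hqp : (⇑T)^[p] q = q := by
    have h := hqper; rw [stmt5_pow_iter] at h; simpa using h
  have hq'p0 : (⇑T)^[p'] q' = q' := by
    have h := hq'per; rw [stmt5_pow_iter] at h; simpa using h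
  have hq'p : (⇑T.symm)^[p'] q' = q' := by
    conv_lhs => rw [← hq'p0]
    exact Function.LeftInverse.iterate T.symm_apply_apply p' q'
  set g : ℕ → X := fun b => (⇑T)^[b] q with hgdef
  set g' : ℕ → X := fun b => (⇑T.symm)^[b] q' with hg'def
  have hgper : ∀ a, g (a + p) = g a := by
    intro a; simp only [hgdef, Function.iterate_add_apply, hqp]
  have hg'per : ∀ a, g' (a + p') = g' a := by
    intro a; simp only [hg'def, Function.iterate_add_apply, hq'p]
  -- choose N large enough
  set S0 : Finset X := (Finset.range p).image g ∪ (Finset.range p').image g' with hS0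
  set S : Finset X := S0 ∪ S0.image (fun v => -v) with hS
  have hev : ∀ᶠ N : ℕ in Filter.atTop, ∀ v ∈ S, ((N : ℝ))⁻¹ • v ∈ U := by
    rw [Filter.eventually_all_finset]
    intro v _
    have h1 : Filter.Tendsto (fun N : ℕ => ((N : ℝ))⁻¹ • v) Filter.atTop (nhds 0) := by
      have := (tendsto_inv_atTop_nhds_zero_nat (𝕜 := ℝ)).smul_const v
      simpa using this
    exact h1.eventually_mem hU
  obtain ⟨N, hNall⟩ := (hev.and (Filter.eventually_ge_atTop 1)).exists
  obtain ⟨hN, hN1⟩ := hNall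
  have hNR : (0 : ℝ) < (N : ℝ) := by exact_mod_cast hN1
  have hNne : (N : ℝ) ≠ 0 := ne_of_gt hNR
  -- the key smallness facts
  have hSg : ∀ a : ℕ, ((N : ℝ))⁻¹ • g a ∈ U := by
    intro a
    rw [stmt5_mod g p hp hgper a]
    refine hN _ ?_
    rw [hS]
    refine Finset.mem_union_left _ ?_
    rw [hS0]
    exact Finset.mem_union_left _
      (Finset.mem_image.mpr ⟨a % p, Finset.mem_range.mpr (Nat.mod_lt _ hp), rfl⟩)
  have hSg' : ∀ a : ℕ, -(((N : ℝ))⁻¹ • g' a) ∈ U := by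
    intro a
    rw [← smul_neg]
    refine hN _ ?_
    rw [hS]
    refine Finset.mem_union_right _ ?_
    refine Finset.mem_image.mpr ⟨g' a, ?_, rfl⟩
    rw [hS0]
    rw [stmt5_mod g' p' hp' hg'per a]
    exact Finset.mem_union_right _
      (Finset.mem_image.mpr ⟨a % p', Finset.mem_range.mpr (Nat.mod_lt _ hp'), rfl⟩)
  -- the period and the periodic pseudotrajectory
  set P : ℕ := k + 2 * N + 2 with hPdef
  set Y : ℕ → X := stmt5_Y x q q' (⇑T) (⇑T.symm) k N P with hYdef
  have hY1 : ∀ r : ℕ, r ≤ k → Y r = x r := fun r h => stmt5_Y1 _ _ _ _ _ _ _ _ h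
  have hY2 : ∀ r : ℕ, k < r → r ≤ k + N + 1 →
      Y r = (1 - ((r - k - 1 : ℕ) : ℝ) / (N : ℝ)) • g (r - k - 1) :=
    fun r h1 h2 => stmt5_Y2 _ _ _ _ _ _ _ _ h1 h2
  have hY3 : ∀ r : ℕ, k + N + 1 < r →
      Y r = (((r - k - N - 1 : ℕ) : ℝ) / (N : ℝ)) • g' (P - r) :=
    fun r h1 => stmt5_Y3 _ _ _ _ _ _ _ _ h1
  -- the one-step estimate on residues
  have hstep : ∀ r : ℕ, r < P → T (Y r) - Y ((r + 1) % P) ∈ U := by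
    intro r hrP
    by_cases h1 : r < k
    · rw [Nat.mod_eq_of_lt (by omega), hY1 r (by omega), hY1 (r + 1) (by omega)]
      exact hx r h1
    by_cases h2 : r = k
    · subst h2
      rw [Nat.mod_eq_of_lt (by omega), hY1 r (le_refl _), hY2 (r + 1) (by omega) (by omega)]
      have e0 : r + 1 - r - 1 = 0 := by omega
      rw [e0]
      simp only [Nat.cast_zero, zero_div, sub_zero, one_smul]
      have : g 0 = q := by simp [hgdef]
      rw [this]
      exact hqU
    by_cases h3 : r ≤ k + N
    · -- region 2 interior
      obtain ⟨a, ha, rfl⟩ : ∃ a, a < N ∧ r = k + 1 + a := ⟨r - k - 1, by omega, by omega⟩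
      rw [Nat.mod_eq_of_lt (by omega), hY2 (k + 1 + a) (by omega) (by omega),
        hY2 (k + 1 + a + 1) (by omega) (by omega)]
      have e1 : k + 1 + a - k - 1 = a := by omega
      have e2 : k + 1 + a + 1 - k - 1 = a + 1 := by omega
      rw [e1, e2]
      have e3 : T (g a) = g (a + 1) := by
        simp only [hgdef]
        rw [Function.iterate_succ_apply']
      rw [map_smul, e3, ← sub_smul]
      have e4 : (1 - (a : ℝ) / (N : ℝ)) - (1 - ((a + 1 : ℕ) : ℝ) / (N : ℝ)) = ((N : ℝ))⁻¹ := by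
        push_cast
        field_simp
        ring
      rw [e4]
      exact hSg (a + 1)
    by_cases h4 : r ≤ k + 2 * N
    · -- region 3 interior (including the junction with region 2)
      obtain ⟨a, ha, rfl⟩ : ∃ a, a < N ∧ r = k + N + 1 + a := ⟨r - k - N - 1, by omega, by omega⟩
      rw [Nat.mod_eq_of_lt (by omega), hY3 (k + N + 1 + a + 1) (by omega)]
      have e1 : k + N + 1 + a + 1 - k - N - 1 = a + 1 := by omega
      have e2 : P - (k + N + 1 + a + 1) = N - a := by omega
      rw [e1, e2]
      by_cases ha0 : a = 0
      · subst ha0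
        rw [hY2 (k + N + 1 + 0) (by omega) (by omega)]
        have e3 : k + N + 1 + 0 - k - 1 = N := by omega
        rw [e3]
        have e4 : (1 - ((N : ℕ) : ℝ) / (N : ℝ)) = 0 := by
          field_simp
          ring
        rw [e4, zero_smul, map_zero, zero_sub]
        have e5 : ((0 + 1 : ℕ) : ℝ) / (N : ℝ) = ((N : ℝ))⁻¹ := by
          push_cast; field_simp
        rw [e5]
        exact hSg' (N - 0)
      · rw [hY3 (k + N + 1 + a) (by omega)]
        have e6 : k + N + 1 + a - k - N - 1 = a := by omega
        have e7 : P - (k + N + 1 + a) = (N - a) + 1 := by omega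
        rw [e6, e7]
        have e8 : T (g' (N - a + 1)) = g' (N - a) := by
          simp only [hg'def]
          rw [Function.iterate_succ_apply']
          exact T.apply_symm_apply _
        rw [map_smul, e8, ← sub_smul]
        have e9 : ((a : ℝ) / (N : ℝ)) - (((a + 1 : ℕ) : ℝ) / (N : ℝ)) = -((N : ℝ))⁻¹ := by
          push_cast
          field_simp
          ring
        rw [e9, neg_smul]
        exact hSg' (N - a)
    · -- last step : r = P - 1
      have hr' : r = k + 2 * N + 1 := by omega
      subst hr'
      have e0 : k + 2 * N + 1 + 1 = P := by omega
      rw [e0, Nat.mod_self, hY1 0 (Nat.zero_le _), hY3 (k + 2 * N + 1) (by omega)]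
      have e1 : k + 2 * N + 1 - k - N - 1 = N := by omega
      have e2 : P - (k + 2 * N + 1) = 1 := by omega
      rw [e1, e2]
      have e3 : ((N : ℕ) : ℝ) / (N : ℝ) = 1 := by field_simp
      rw [e3, one_smul]
      have e4 : T (g' 1) = q' := by
        simp only [hg'def]
        rw [Function.iterate_one]
        exact T.apply_symm_apply _
      rw [e4]
      exact hq'U
  -- the periodic pseudotrajectory indexed by ℤ
  set y : ℤ → X := fun j => Y ((j % (P : ℤ)).toNat) with hydef
  have hPposZ : (0 : ℤ) < (P : ℤ) := by positivity
  have hres : ∀ j : ℤ, ((j % (P : ℤ)).toNat) < P := by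
    intro j
    have h1 := Int.emod_lt_of_pos j hPposZ
    have h2 := Int.emod_nonneg j (ne_of_gt hPposZ)
    omega
  have herr : ∀ j : ℤ, T (y j) - y (j + 1) ∈ U := by
    intro j
    have h2 : y (j + 1) = Y ((((j % (P : ℤ)).toNat) + 1) % P) := by
      simp only [hydef]
      congr 1
      have e1 : ((j % (P : ℤ)).toNat : ℤ) = j % (P : ℤ) :=
        Int.toNat_of_nonneg (Int.emod_nonneg j (ne_of_gt hPposZ))
      have eP : (1 : ℤ) % (P : ℤ) = 1 :=
        Int.emod_eq_of_lt (by norm_num) (by exact_mod_cast (by omega : 1 < P))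
      have e2 : (j + 1) % (P : ℤ) = (((((j % (P : ℤ)).toNat) + 1) % P : ℕ) : ℤ) :=
        calc (j + 1) % (P : ℤ) = (j % (P : ℤ) + 1 % (P : ℤ)) % (P : ℤ) := Int.add_emod j 1 P
          _ = (j % (P : ℤ) + 1) % (P : ℤ) := by rw [eP]
          _ = (((j % (P : ℤ)).toNat : ℤ) + 1) % (P : ℤ) := by rw [e1]
          _ = ((((j % (P : ℤ)).toNat + 1 : ℕ)) : ℤ) % ((P : ℕ) : ℤ) := by norm_cast
          _ = (((((j % (P : ℤ)).toNat) + 1) % P : ℕ) : ℤ) := (Int.natCast_mod _ _).symm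
      rw [e2, Int.toNat_natCast]
    rw [h2]
    exact hstep _ (hres j)
  have hper : ∀ j : ℤ, y (j + (P : ℕ)) = y j := by
    intro j
    simp only [hydef]
    congr 2
    conv_lhs => rw [show j + (P : ℤ) = j + (P : ℤ) * 1 by ring]
    exact Int.add_mul_emod_self_left ..
  obtain ⟨o, ho1, -, ho3⟩ := hshadow y herr ⟨P, by omega, hper⟩
  refine ⟨o 0, ?_⟩
  intro j hj
  have horb : ∀ m : ℕ, o (m : ℤ) = (⇑T)^[m] (o 0) := by
    intro m
    induction m with
    | zero => simp
    | succ m ih =>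
      have h := ho1 (m : ℤ)
      rw [ih] at h
      rw [show ((m + 1 : ℕ) : ℤ) = (m : ℤ) + 1 by push_cast; ring, h,
        Function.iterate_succ_apply']
  have hyj : y (j : ℤ) = x j := by
    simp only [hydef]
    have e1 : (j : ℤ) % (P : ℤ) = (j : ℤ) :=
      Int.emod_eq_of_lt (by positivity) (by exact_mod_cast (by omega : j < P))
    rw [e1, Int.toNat_natCast]
    exact hY1 j hj
  have hfin := ho3 (j : ℤ)
  rw [hyj, horb j] at hfin
  have e2 : ((T : X →L[ℝ] X) ^ j) (o 0) = (⇑T)^[j] (o 0) := by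
    rw [stmt5_pow_iter]
    simp
  rw [e2]
  exact hfin
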